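/- Let G be a torsion group (every element of G has finite order) and let H be a weakly maximal subgroup of G. Then H is self-normalizing: the normalizer of H in G equals H. -/

import Mathlib

/-- A subgroup `H` of a group `G` is weakly maximal if it has infinite index and every
subgroup strictly containing it has finite index. -/
def IsWeaklyMaximal {G : Type*} [Group G] (H : Subgroup G) : Prop :=
  H.index = 0 ∧ ∀ M : Subgroup G, H < M → M.index ≠ 0

theorem weaklyMaximal_selfNormalizing {G : Type*} [Group G]
    (htor : ∀ g : G, IsOfFinOrder g) (H : Subgroup G) (hH : IsWeaklyMaximal H) :
    Subgroup.normalizer (H : Set G) = H := by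
  by_contra hne
  have hlt : H < Subgroup.normalizer (H : Set G) := lt_of_le_of_ne H.le_normalizer (Ne.symm hne)
  obtain ⟨g, hgN, hgH⟩ := SetLike.exists_of_lt hlt
  set M : Subgroup G := H ⊔ Subgroup.zpowers g with hM
  have hle : H ≤ M := le_sup_left
  have hgM : g ∈ M := Subgroup.mem_sup_right (Subgroup.mem_zpowers g)
  have hHM : H < M := lt_of_le_of_ne hle (fun h => hgH (h ▸ hgM))
  have hMfin : M.index ≠ 0 := hH.2 M hHM
  have hMN : M ≤ Subgroup.normalizer (H : Set G) :=
    sup_le H.le_normalizer ((Subgroup.zpowers_le).2 hgN)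
  -- H.subgroupOf M is normal in M
  haveI hnorm : (H.subgroupOf M).Normal := by
    constructor
    intro n hn m
    have hm : (m : G) ∈ Subgroup.normalizer (H : Set G) := hMN m.2
    simp only [Subgroup.mem_subgroupOf] at hn ⊢
    exact (Subgroup.mem_normalizer_iff.mp hm n).1 hn
  set K := H.subgroupOf M with hK
  set gbar : M ⧸ K := QuotientGroup.mk ⟨g, hgM⟩ with hgbar
  -- quotient is generated by gbar
  have htop : Subgroup.zpowers gbar = ⊤ := by
    rw [eq_top_iff]
    intro q hq
    clear hq
    obtain ⟨⟨m, hm⟩, rfl⟩ := QuotientGroup.mk_surjective q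
    have hm' : m ∈ M := hm
    revert hm
    rw [hM, ← Subgroup.closure_eq H, ← Subgroup.closure_eq (Subgroup.zpowers g),
      ← Subgroup.closure_union] at hm'
    refine Subgroup.closure_induction
      (p := fun x _ => ∀ hx : x ∈ M, (QuotientGroup.mk ⟨x, hx⟩ : M ⧸ K) ∈ Subgroup.zpowers gbar)
      ?_ ?_ ?_ ?_ hm'
    · rintro x (hx | hx) hxM
      · -- x ∈ H : maps to 1
        have : (QuotientGroup.mk ⟨x, hxM⟩ : M ⧸ K) = 1 := by
          rw [QuotientGroup.eq_one_iff]
          exact hx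
        rw [this]; exact Subgroup.one_mem _
      · obtain ⟨k, rfl⟩ := hx
        have : (QuotientGroup.mk ⟨g ^ k, hxM⟩ : M ⧸ K) = gbar ^ k := by
          rw [hgbar, ← QuotientGroup.mk_zpow]
          rfl
        rw [this]
        exact zpow_mem (Subgroup.mem_zpowers gbar) k
    · intro htop'
      have : (QuotientGroup.mk ⟨(1 : G), htop'⟩ : M ⧸ K) = 1 := rfl
      rw [this]; exact Subgroup.one_mem _
    · intro x y hx hy ihx ihy hxy
      have hxM : x ∈ M := by
        rw [hM, ← Subgroup.closure_eq H, ← Subgroup.closure_eq (Subgroup.zpowers g),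
          ← Subgroup.closure_union]; exact hx
      have hyM : y ∈ M := by
        rw [hM, ← Subgroup.closure_eq H, ← Subgroup.closure_eq (Subgroup.zpowers g),
          ← Subgroup.closure_union]; exact hy
      have : (QuotientGroup.mk ⟨x * y, hxy⟩ : M ⧸ K) =
          (QuotientGroup.mk ⟨x, hxM⟩ : M ⧸ K) * QuotientGroup.mk ⟨y, hyM⟩ := rfl
      rw [this]
      exact Subgroup.mul_mem _ (ihx hxM) (ihy hyM)
    · intro x hx ihx hxinv
      have hxM : x ∈ M := by
        rw [hM, ← Subgroup.closure_eq H, ← Subgroup.closure_eq (Subgroup.zpowers g),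
          ← Subgroup.closure_union]; exact hx
      have : (QuotientGroup.mk ⟨x⁻¹, hxinv⟩ : M ⧸ K) =
          (QuotientGroup.mk ⟨x, hxM⟩ : M ⧸ K)⁻¹ := rfl
      rw [this]
      exact Subgroup.inv_mem _ (ihx hxM)
  -- gbar has finite order, so the quotient is finite
  have hfin : IsOfFinOrder gbar := by
    have : IsOfFinOrder (⟨g, hgM⟩ : M) := by
      obtain ⟨n, hn, hgn⟩ := (isOfFinOrder_iff_pow_eq_one).1 (htor g)
      exact isOfFinOrder_iff_pow_eq_one.2 ⟨n, hn, by ext; simpa using hgn⟩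
    exact (QuotientGroup.mk' K).isOfFinOrder this
  haveI : Finite (Subgroup.zpowers gbar) := hfin.finite_zpowers
  haveI : Finite (M ⧸ K) :=
    Finite.of_surjective (fun x : Subgroup.zpowers gbar => (x : M ⧸ K))
      (fun q => ⟨⟨q, htop ▸ Subgroup.mem_top q⟩, rfl⟩)
  have hKfin : K.index ≠ 0 := Subgroup.index_ne_zero_of_finite
  have := Subgroup.relIndex_mul_index hle
  rw [hH.1] at this
  exact mul_ne_zero hKfin hMfin this
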